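/- Let 𝔫 be a finite-dimensional Lie algebra over ℚ, let f be a Lie algebra automorphism of 𝔫, and let f̄ denote the base change of f to the Lie algebra ℚ̄ ⊗_ℚ 𝔫 over an algebraic closure ℚ̄ of ℚ. Then there exists a grading ℚ̄ ⊗_ℚ 𝔫 = ⊕_{k ∈ ℤ} 𝔫_k such that f̄(𝔫_k) = 𝔫_k for all k ∈ ℤ and every eigenvalue of the restriction of f̄ to 𝔫_0 is a root of unity. In particular, if no eigenvalue of f (in ℚ̄) is a root of unity, then ℚ̄ ⊗_ℚ 𝔫 admits a very special grading. -/

import Mathlib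

open TensorProduct

/-- A (ℤ-)grading of a Lie algebra `𝔪` over `K`: a direct sum decomposition
`𝔪 = ⊕_{k ∈ ℤ} 𝔪ₖ` with `⁅𝔪ᵢ, 𝔪ⱼ⁆ ⊆ 𝔪ᵢ₊ⱼ`. -/
def IsLieGrading (K 𝔪 : Type*) [CommRing K] [LieRing 𝔪] [LieAlgebra K 𝔪]
    (p : ℤ → Submodule K 𝔪) : Prop :=
  DirectSum.IsInternal p ∧
    ∀ (i j : ℤ), ∀ x ∈ p i, ∀ y ∈ p j, ⁅x, y⁆ ∈ p (i + j)

/-- A Lie algebra admits a *special* grading if it has a grading with `𝔪₀ ∩ 𝔷 = 0`,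
where `𝔷` is the center. -/
def HasSpecialGrading (K 𝔪 : Type*) [CommRing K] [LieRing 𝔪] [LieAlgebra K 𝔪] : Prop :=
  ∃ p : ℤ → Submodule K 𝔪, IsLieGrading K 𝔪 p ∧
    p 0 ⊓ (LieAlgebra.center K 𝔪).toSubmodule = ⊥

/-- A Lie algebra admits a *very special* grading if it has a grading with `𝔪₀ = 0`. -/
def HasVerySpecialGrading (K 𝔪 : Type*) [CommRing K] [LieRing 𝔪] [LieAlgebra K 𝔪] : Prop :=
  ∃ p : ℤ → Submodule K 𝔪, IsLieGrading K 𝔪 p ∧ p 0 = ⊥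

/-- A Lie algebra admits a *non-negative special* grading if it has a grading with
`𝔪ₖ = 0` for `k < 0` and `𝔪₀ ∩ 𝔷 = 0`. -/
def HasNonnegSpecialGrading (K 𝔪 : Type*) [CommRing K] [LieRing 𝔪] [LieAlgebra K 𝔪] : Prop :=
  ∃ p : ℤ → Submodule K 𝔪, IsLieGrading K 𝔪 p ∧ (∀ k < 0, p k = ⊥) ∧
    p 0 ⊓ (LieAlgebra.center K 𝔪).toSubmodule = ⊥

/-- A Lie algebra admits a *positive* grading if it has a grading with
`𝔪ₖ = 0` for `k ≤ 0`. -/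
def HasPositiveGrading (K 𝔪 : Type*) [CommRing K] [LieRing 𝔪] [LieAlgebra K 𝔪] : Prop :=
  ∃ p : ℤ → Submodule K 𝔪, IsLieGrading K 𝔪 p ∧ ∀ k ≤ 0, p k = ⊥


open scoped DirectSum


lemma auxGrading_disjoint_biSup {R N ι : Type*} [Ring R] [AddCommGroup N] [Module R N]
    {p : ι → Submodule R N} (h : iSupIndep p) {A B : Set ι} (hAB : Disjoint A B) :
    Disjoint (⨆ i ∈ A, p i) (⨆ i ∈ B, p i) := by
  classical
  rw [Submodule.disjoint_def]
  intro x hxA hxB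
  rw [Submodule.mem_biSup_iff_exists_dfinsupp (· ∈ A)] at hxA
  rw [Submodule.mem_biSup_iff_exists_dfinsupp (· ∈ B)] at hxB
  obtain ⟨f, hf⟩ := hxA
  obtain ⟨g, hg⟩ := hxB
  have hinj := h.dfinsupp_lsum_injective
  have hfg : f.filter (· ∈ A) = g.filter (· ∈ B) := by
    apply hinj
    rw [hf, hg]
  have hz : f.filter (· ∈ A) = 0 := by
    ext i
    by_cases hi : i ∈ A
    · have hiB : i ∉ B := fun hb => hAB.ne_of_mem hi hb rfl
      rw [hfg]
      simp [DFinsupp.filter_apply, hiB]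
    · simp [DFinsupp.filter_apply, hi]
  rw [← hf, hz, map_zero]

lemma auxGrading_isInternal_fibers {R N ι κ : Type*} [Ring R] [AddCommGroup N] [Module R N] [DecidableEq ι] [DecidableEq κ]
    (g : ι → κ) {p : ι → Submodule R N} (h : DirectSum.IsInternal p) :
    DirectSum.IsInternal (fun k => ⨆ i ∈ g ⁻¹' {k}, p i) := by
  classical
  apply DirectSum.isInternal_submodule_of_iSupIndep_of_iSup_eq_top
  · intro k
    have hd : Disjoint (⨆ i ∈ g ⁻¹' {k}, p i) (⨆ i ∈ {i | g i ≠ k}, p i) := by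
      refine auxGrading_disjoint_biSup h.submodule_iSupIndep ?_
      rw [Set.disjoint_left]
      intro i hi hi'
      exact hi' hi
    refine hd.mono_right ?_
    refine iSup₂_le fun k' hk' => iSup₂_le fun i hi => ?_
    refine le_iSup₂ (f := fun i (_ : i ∈ {i | g i ≠ k}) => p i) i ?_
    simp only [Set.mem_preimage, Set.mem_singleton_iff] at hi
    simpa [hi] using hk'
  · rw [← top_le_iff, ← h.submodule_iSup_eq_top]
    refine iSup_le fun i => ?_
    refine le_trans ?_ (le_iSup _ (g i))
    exact le_iSup₂ (f := fun i' (_ : i' ∈ g ⁻¹' {g i}) => p i') i rfl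



lemma auxGrading_lie_mem_maxGenEigenspace {K L : Type*} [Field K] [LieRing L] [LieAlgebra K L]
    (F : Module.End K L) (hF : ∀ x y : L, F ⁅x, y⁆ = ⁅F x, F y⁆) {μ ν : K} {x y : L}
    (hx : x ∈ F.maxGenEigenspace μ) (hy : y ∈ F.maxGenEigenspace ν) :
    ⁅x, y⁆ ∈ F.maxGenEigenspace (μ * ν) := by
  classical
  rw [Module.End.mem_maxGenEigenspace] at hx hy ⊢
  obtain ⟨m, hm⟩ := hx
  obtain ⟨n, hn⟩ := hy
  set b : L ⊗[K] L →ₗ[K] L :=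
    TensorProduct.lift (LinearMap.mk₂ K (fun x y => ⁅x, y⁆) add_lie smul_lie lie_add lie_smul)
    with hbdef
  have hbt : ∀ u v : L, b (u ⊗ₜ v) = ⁅u, v⁆ := fun _ _ => rfl
  set G : Module.End K (L ⊗[K] L) := TensorProduct.map F F with hGdef
  have hcom : b ∘ₗ (G - (μ * ν) • 1) = (F - (μ * ν) • 1) ∘ₗ b := by
    apply TensorProduct.ext'
    intro u v
    simp [hbt, hF, hGdef, smul_sub, map_sub]
  have hcompow : ∀ (N : ℕ) (w : L ⊗[K] L),
      b (((G - (μ * ν) • 1) ^ N) w) = ((F - (μ * ν) • 1) ^ N) (b w) := by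
    intro N
    induction N with
    | zero => intro w; simp
    | succ N ih =>
      intro w
      rw [pow_succ', pow_succ', Module.End.mul_apply, Module.End.mul_apply]
      have h1 : b ((G - (μ * ν) • 1) (((G - (μ * ν) • 1) ^ N) w))
          = (F - (μ * ν) • 1) (b (((G - (μ * ν) • 1) ^ N) w)) := by
        rw [← LinearMap.comp_apply, hcom]; rfl
      rw [h1, ih]
  set A : Module.End K (L ⊗[K] L) := TensorProduct.map (F - μ • 1) F with hAdef
  set B : Module.End K (L ⊗[K] L) := μ • TensorProduct.map 1 (F - ν • 1) with hBdef
  have hAB : A + B = G - (μ * ν) • 1 := by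
    apply TensorProduct.ext'
    intro u v
    simp only [hAdef, hBdef, hGdef, LinearMap.add_apply, LinearMap.smul_apply,
      TensorProduct.map_tmul, LinearMap.sub_apply, LinearMap.smul_apply, Module.End.one_apply,
      Module.End.one_apply, TensorProduct.sub_tmul, TensorProduct.tmul_sub, smul_sub,
      TensorProduct.smul_tmul', TensorProduct.tmul_smul, smul_smul]
    abel
  have hABc : Commute A B := by
    show A * B = B * A
    apply TensorProduct.ext'
    intro u v
    simp [hAdef, hBdef, Module.End.mul_apply, TensorProduct.map_tmul, map_sub, map_smul]
  have key : ∀ i j : ℕ, (A ^ i * B ^ j) (x ⊗ₜ y)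
      = μ ^ j • (((F - μ • 1) ^ i) x ⊗ₜ ((F ^ i) (((F - ν • 1) ^ j) y))) := by
    intro i j
    have hA : A ^ i = TensorProduct.map ((F - μ • 1) ^ i) (F ^ i) := by
      rw [hAdef, TensorProduct.map_pow]
    have hB : B ^ j = (μ ^ j) • TensorProduct.map (1 : Module.End K L) ((F - ν • 1) ^ j) := by
      rw [hBdef, smul_pow, TensorProduct.map_pow, one_pow]
    rw [Module.End.mul_apply, hB, hA]
    simp [TensorProduct.map_tmul]
  refine ⟨m + n, ?_⟩
  have hxy : ⁅x, y⁆ = b (x ⊗ₜ y) := rfl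
  rw [hxy, ← hcompow, ← hAB, hABc.add_pow]
  rw [LinearMap.sum_apply]
  rw [show (∑ k ∈ Finset.range (m + n + 1),
      (A ^ k * B ^ (m + n - k) * (Nat.choose (m + n) k : Module.End K (L ⊗[K] L))) (x ⊗ₜ y))
      = ∑ k ∈ Finset.range (m + n + 1),
      ((Nat.choose (m + n) k : ℕ) • ((A ^ k * B ^ (m + n - k)) (x ⊗ₜ y))) from
    Finset.sum_congr rfl fun k _ => by
      rw [Module.End.mul_apply, Module.End.natCast_apply, map_nsmul, Module.End.mul_apply]]
  rw [show ∀ s : L ⊗[K] L, s = 0 → b s = 0 from fun s hs => by rw [hs, map_zero]]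
  apply Finset.sum_eq_zero
  intro k hk
  rcases le_or_gt m k with h | h
  · have hz : ((F - μ • 1) ^ k) x = 0 := by
      rw [← Nat.sub_add_cancel h, pow_add, Module.End.mul_apply, hm, map_zero]
    rw [key, hz, TensorProduct.zero_tmul, smul_zero, smul_zero]
  · have hn' : n ≤ m + n - k := by omega
    have hz : ((F - ν • 1) ^ (m + n - k)) y = 0 := by
      rw [← Nat.sub_add_cancel hn', pow_add, Module.End.mul_apply, hn, map_zero]
    rw [key, hz, map_zero, TensorProduct.tmul_zero, smul_zero, smul_zero]


lemma auxGrading_exists_good_int {n : ℕ} (T : Set (Fin n →₀ ℤ)) (hfin : T.Finite)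
    (h0 : (0 : Fin n →₀ ℤ) ∉ T) :
    ∃ N : ℤ, ∀ v ∈ T, (∑ i : Fin n, v i * N ^ (i : ℕ)) ≠ 0 := by
  classical
  set P : (Fin n →₀ ℤ) → Polynomial ℤ :=
    fun v => ∑ i : Fin n, Polynomial.C (v i) * Polynomial.X ^ (i : ℕ) with hP
  have hPne : ∀ v ∈ T, P v ≠ 0 := by
    intro v hv hP0
    have hvne : v ≠ 0 := fun h => h0 (h ▸ hv)
    obtain ⟨i, hi⟩ : ∃ i, v i ≠ 0 := by
      by_contra hcon
      push_neg at hcon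
      exact hvne (Finsupp.ext hcon)
    have hco : (P v).coeff (i : ℕ) = v i := by
      rw [hP]
      simp only [Polynomial.finset_sum_coeff, Polynomial.coeff_C_mul_X_pow]
      rw [Finset.sum_eq_single i]
      · simp
      · intro j _ hj
        have : (i : ℕ) ≠ (j : ℕ) := fun h => hj (Fin.val_injective h).symm
        simp [this]
      · simp
    rw [hP0] at hco
    simp at hco
    exact hi hco.symm
  have hroots : (⋃ v ∈ T, {x : ℤ | (P v).IsRoot x}).Finite :=
    Set.Finite.biUnion hfin fun v hv => Polynomial.finite_setOf_isRoot (hPne v hv)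
  obtain ⟨N, hN⟩ := hroots.infinite_compl.nonempty
  refine ⟨N, fun v hv hsum => ?_⟩
  apply hN
  refine Set.mem_biUnion hv ?_
  show (P v).IsRoot N
  rw [Polynomial.IsRoot, hP]
  simp only [Polynomial.eval_finset_sum, Polynomial.eval_mul, Polynomial.eval_C,
    Polynomial.eval_pow, Polynomial.eval_X]
  exact hsum

set_option maxHeartbeats 2000000

/-- Let `𝔫` be a finite-dimensional Lie algebra over `ℚ` and `f` a Lie
algebra automorphism of `𝔫`, with base change `f̄` to an algebraic closure `ℚ̄` of `ℚ`.
Then there is a grading `ℚ̄ ⊗ 𝔫 = ⊕ₖ 𝔫ₖ` with `f̄(𝔫ₖ) = 𝔫ₖ` for all `k` such that every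
eigenvalue of the restriction of `f̄` to `𝔫₀` is a root of unity.  In particular, if no
eigenvalue of `f` is a root of unity then `ℚ̄ ⊗ 𝔫` admits a very special grading. -/
theorem exists_invariant_grading_of_lieAut
    {𝔫 : Type*} [LieRing 𝔫] [LieAlgebra ℚ 𝔫] [FiniteDimensional ℚ 𝔫]
    (f : 𝔫 ≃ₗ⁅ℚ⁆ 𝔫) :
    (∃ p : ℤ → Submodule (AlgebraicClosure ℚ) ((AlgebraicClosure ℚ) ⊗[ℚ] 𝔫),
      IsLieGrading (AlgebraicClosure ℚ) ((AlgebraicClosure ℚ) ⊗[ℚ] 𝔫) p ∧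
      (∀ k : ℤ, Submodule.map
          (LinearMap.baseChange (AlgebraicClosure ℚ) f.toLieHom.toLinearMap) (p k) = p k) ∧
      (∀ μ : AlgebraicClosure ℚ,
        (∃ x ∈ p 0, x ≠ 0 ∧
            LinearMap.baseChange (AlgebraicClosure ℚ) f.toLieHom.toLinearMap x = μ • x) →
          ∃ n : ℕ, 0 < n ∧ μ ^ n = 1)) ∧
    ((∀ μ : AlgebraicClosure ℚ,
        Module.End.HasEigenvalue
          (LinearMap.baseChange (AlgebraicClosure ℚ) f.toLieHom.toLinearMap) μ →
          ¬ ∃ n : ℕ, 0 < n ∧ μ ^ n = 1) →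
      HasVerySpecialGrading (AlgebraicClosure ℚ) ((AlgebraicClosure ℚ) ⊗[ℚ] 𝔫)) := by
    classical
  set F := LinearMap.baseChange (AlgebraicClosure ℚ) f.toLieHom.toLinearMap with hFdef
  -- F is a Lie algebra morphism
  have hFbr : ∀ x y : (AlgebraicClosure ℚ) ⊗[ℚ] 𝔫, F ⁅x, y⁆ = ⁅F x, F y⁆ := by
    have hadd : ∀ (x m n : (AlgebraicClosure ℚ) ⊗[ℚ] 𝔫), ⁅x, m + n⁆ = ⁅x, m⁆ + ⁅x, n⁆ :=
      fun x m n => lie_add x m n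
    have hadd' : ∀ (x y m : (AlgebraicClosure ℚ) ⊗[ℚ] 𝔫), ⁅x + y, m⁆ = ⁅x, m⁆ + ⁅y, m⁆ :=
      fun x y m => add_lie x y m
    have hz : ∀ (x : (AlgebraicClosure ℚ) ⊗[ℚ] 𝔫), ⁅x, (0 : (AlgebraicClosure ℚ) ⊗[ℚ] 𝔫)⁆ = 0 :=
      fun x => lie_zero x
    intro x y
    induction x using TensorProduct.induction_on with
    | zero => simp
    | tmul a u =>
      induction y using TensorProduct.induction_on with
      | zero => rw [hz, map_zero, hz]
      | tmul b w => simp [hFdef]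
      | add y₁ y₂ h₁ h₂ => rw [hadd, map_add, h₁, h₂, map_add, hadd]
    | add x₁ x₂ h₁ h₂ => rw [hadd', map_add, h₁, h₂, map_add, hadd']
  -- F is injective
  have hFinj : Function.Injective F := by
    have h : (LinearMap.baseChange (AlgebraicClosure ℚ) f.symm.toLieHom.toLinearMap).comp F
        = LinearMap.id := by
      rw [hFdef, ← LinearMap.baseChange_comp]
      have h2 : (f.symm.toLieHom.toLinearMap).comp (f.toLieHom.toLinearMap) = LinearMap.id := by
        ext x; exact f.symm_apply_apply x
      rw [h2, LinearMap.baseChange_id]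
    intro a b hab
    have := congrArg (LinearMap.baseChange (AlgebraicClosure ℚ) f.symm.toLieHom.toLinearMap) hab
    rwa [← LinearMap.comp_apply, ← LinearMap.comp_apply, h, LinearMap.id_apply,
      LinearMap.id_apply] at this
  set E : AlgebraicClosure ℚ → Submodule (AlgebraicClosure ℚ) ((AlgebraicClosure ℚ) ⊗[ℚ] 𝔫) :=
    fun c => Module.End.maxGenEigenspace F c with hEdef
  have hEind : iSupIndep E := Module.End.independent_maxGenEigenspace F
  have hEtop : ⨆ c, E c = ⊤ := Module.End.iSup_maxGenEigenspace_eq_top F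
  have hev : ∀ c, E c ≠ ⊥ → Module.End.HasEigenvalue F c := by
    intro c hc
    have hc' : Module.End.maxGenEigenspace F c ≠ ⊥ := hc
    rw [Module.End.maxGenEigenspace_eq] at hc'
    replace hc := hc'
    exact Module.End.hasEigenvalue_of_hasGenEigenvalue (k := Module.End.maxGenEigenspaceIndex F c) hc
  set S : Set (AlgebraicClosure ℚ) := {c | E c ≠ ⊥} with hSdef
  have hSfin : S.Finite :=
    Set.Finite.subset (Module.End.finite_hasEigenvalue F) (fun c hc => hev c hc)
  have hS0 : ∀ c ∈ S, c ≠ 0 := by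
    intro c hc hc0
    obtain ⟨v, hv⟩ := (hev c hc).exists_hasEigenvector
    have h1 : F v = 0 := by
      have := hv.apply_eq_smul
      rwa [hc0, zero_smul] at this
    exact hv.right (hFinj (by rw [h1, map_zero]))
  -- the subgroup generated by the eigenvalues
  set T : Set (AlgebraicClosure ℚ)ˣ := {u | (u : AlgebraicClosure ℚ) ∈ S} with hTdef
  have hTfin : T.Finite := by
    have : T = Units.val ⁻¹' S := rfl
    rw [this]
    exact Set.Finite.preimage (fun a _ b _ h => Units.ext h) hSfin
  haveI : Finite ↥T := hTfin.to_subtype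
  haveI : Group.FG ↥(Subgroup.closure T) := Group.closure_finite_fg T
  obtain ⟨nn, ι, hι, pr, hpr, ex, ⟨e⟩⟩ :=
    AddCommGroup.equiv_free_prod_directSum_zmod (Additive ↥(Subgroup.closure T))
  haveI : Finite (⨁ i : ι, ZMod (pr i ^ ex i)) := by
    haveI : ∀ i, NeZero (pr i ^ ex i) := fun i => ⟨pow_ne_zero _ (hpr i).pos.ne'⟩
    exact Finite.of_injective (fun t i => t i) DFunLike.coe_injective
  set kk := Nat.card (⨁ i : ι, ZMod (pr i ^ ex i)) with hkk
  have hkpos : 0 < kk := Nat.card_pos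
  have htor : ∀ t : ⨁ i : ι, ZMod (pr i ^ ex i), kk • t = 0 := fun t => card_nsmul_eq_zero'
  have hmemT : ∀ c (hc : c ∈ S), Units.mk0 c (hS0 c hc) ∈ Subgroup.closure T :=
    fun c hc => Subgroup.subset_closure (by simpa [hTdef] using hc)
  set gg : ∀ c : AlgebraicClosure ℚ, c ∈ S → ↥(Subgroup.closure T) :=
    fun c hc => ⟨Units.mk0 c (hS0 c hc), hmemT c hc⟩ with hggdef
  set w : AlgebraicClosure ℚ → (Fin nn →₀ ℤ) :=
    fun c => if h : c ∈ S then (e (Additive.ofMul (gg c h))).1 else 0 with hwdef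
  have hw_mul : ∀ a b (ha : a ∈ S) (hb : b ∈ S), a * b ∈ S → w (a * b) = w a + w b := by
    intro a b ha hb hab
    have hgmul : gg (a * b) hab = gg a ha * gg b hb := by
      rw [hggdef]
      ext
      simp
    rw [hwdef]
    simp only [dif_pos ha, dif_pos hb, dif_pos hab]
    rw [hgmul]
    have : Additive.ofMul (gg a ha * gg b hb)
        = Additive.ofMul (gg a ha) + Additive.ofMul (gg b hb) := rfl
    rw [this, map_add]
    rfl
  have hw_tor : ∀ c (hc : c ∈ S), w c = 0 → c ^ kk = 1 := by
    intro c hc h0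
    have h1 : e (Additive.ofMul ((gg c hc) ^ kk)) = 0 := by
      have h2 : Additive.ofMul ((gg c hc) ^ kk) = kk • Additive.ofMul (gg c hc) := by
        simp
      rw [h2, map_nsmul]
      have h3 : e (Additive.ofMul (gg c hc)) = ((e (Additive.ofMul (gg c hc))).1,
          (e (Additive.ofMul (gg c hc))).2) := rfl
      rw [h3]
      have h4 : (e (Additive.ofMul (gg c hc))).1 = 0 := by
        have := h0
        rw [hwdef] at this
        simpa [dif_pos hc] using this
      rw [h4, Prod.smul_mk, smul_zero, htor]
      rfl
    have h5 : (gg c hc) ^ kk = 1 := by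
      have := e.injective (by rw [h1, map_zero] : e (Additive.ofMul ((gg c hc) ^ kk)) = e 0)
      exact Additive.ofMul.injective this
    have h6 : ((gg c hc : (AlgebraicClosure ℚ)ˣ) : AlgebraicClosure ℚ) ^ kk = 1 := by
      have := congrArg (fun u : ↥(Subgroup.closure T) => ((u : (AlgebraicClosure ℚ)ˣ) :
        AlgebraicClosure ℚ)) h5
      simpa using this
    simpa [hggdef] using h6
  set Tbad : Set (Fin nn →₀ ℤ) :=
    w '' {c | c ∈ S ∧ ¬ ∃ n : ℕ, 0 < n ∧ c ^ n = 1} with hTbad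
  have hTbadfin : Tbad.Finite := ((hSfin.subset (fun c hc => hc.1)).image w)
  have hTbad0 : (0 : Fin nn →₀ ℤ) ∉ Tbad := by
    rintro ⟨c, ⟨hc, hcn⟩, hc0⟩
    exact hcn ⟨kk, hkpos, hw_tor c hc hc0⟩
  obtain ⟨N, hN⟩ := auxGrading_exists_good_int Tbad hTbadfin hTbad0
  set χ : AlgebraicClosure ℚ → ℤ := fun c => ∑ i : Fin nn, (w c) i * N ^ (i : ℕ) with hχdef
  have hχadd : ∀ a b (ha : a ∈ S) (hb : b ∈ S), a * b ∈ S → χ (a * b) = χ a + χ b := by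
    intro a b ha hb hab
    rw [hχdef]
    simp only [hw_mul a b ha hb hab, Finsupp.add_apply, add_mul]
    rw [Finset.sum_add_distrib]
  have hχne : ∀ c, c ∈ S → (¬ ∃ n : ℕ, 0 < n ∧ c ^ n = 1) → χ c ≠ 0 := by
    intro c hc hcr
    exact hN (w c) ⟨c, ⟨hc, hcr⟩, rfl⟩
  set p : ℤ → Submodule (AlgebraicClosure ℚ) ((AlgebraicClosure ℚ) ⊗[ℚ] 𝔫) :=
    fun k => ⨆ c ∈ χ ⁻¹' {k}, E c with hpdef
  -- internality
  have hinternal : DirectSum.IsInternal p :=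
    auxGrading_isInternal_fibers χ
      (DirectSum.isInternal_submodule_of_iSupIndep_of_iSup_eq_top hEind hEtop)
  -- bracket property
  have hEbr : ∀ (c d : AlgebraicClosure ℚ) (x y : (AlgebraicClosure ℚ) ⊗[ℚ] 𝔫),
      x ∈ E c → y ∈ E d → ⁅x, y⁆ ∈ E (c * d) := by
    intro c d x y hx hy
    exact auxGrading_lie_mem_maxGenEigenspace F hFbr hx hy
  have hEle : ∀ (c : AlgebraicClosure ℚ) (k : ℤ), χ c = k → E c ≤ p k := by
    intro c k hc
    rw [hpdef]
    exact le_iSup₂ (f := fun c' (_ : c' ∈ χ ⁻¹' {k}) => E c') c hc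
  have hzl : ∀ y : (AlgebraicClosure ℚ) ⊗[ℚ] 𝔫, ⁅(0 : (AlgebraicClosure ℚ) ⊗[ℚ] 𝔫), y⁆ = 0 :=
    fun y => zero_lie y
  have hlz : ∀ x : (AlgebraicClosure ℚ) ⊗[ℚ] 𝔫, ⁅x, (0 : (AlgebraicClosure ℚ) ⊗[ℚ] 𝔫)⁆ = 0 :=
    fun x => lie_zero x
  have haddl : ∀ x y m : (AlgebraicClosure ℚ) ⊗[ℚ] 𝔫, ⁅x + y, m⁆ = ⁅x, m⁆ + ⁅y, m⁆ :=
    fun x y m => add_lie x y m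
  have hladd : ∀ x m n : (AlgebraicClosure ℚ) ⊗[ℚ] 𝔫, ⁅x, m + n⁆ = ⁅x, m⁆ + ⁅x, n⁆ :=
    fun x m n => lie_add x m n
  have hbr : ∀ (i j : ℤ), ∀ x ∈ p i, ∀ y ∈ p j, ⁅x, y⁆ ∈ p (i + j) := by
    intro i j x hx y hy
    have hx' : x ∈ ⨆ c : ↥(χ ⁻¹' {i}), E (c : AlgebraicClosure ℚ) := by
      rw [iSup_subtype]
      exact hx
    have hy' : y ∈ ⨆ c : ↥(χ ⁻¹' {j}), E (c : AlgebraicClosure ℚ) := by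
      rw [iSup_subtype]
      exact hy
    clear hx hy
    refine Submodule.iSup_induction (motive := fun x : (AlgebraicClosure ℚ) ⊗[ℚ] 𝔫 => ⁅x, y⁆ ∈ p (i + j)) _ hx' ?_ ?_ ?_
    · rintro ⟨c, hc⟩ x' hx''
      refine Submodule.iSup_induction (motive := fun y : (AlgebraicClosure ℚ) ⊗[ℚ] 𝔫 => ⁅x', y⁆ ∈ p (i + j)) _ hy' ?_ ?_ ?_
      · rintro ⟨d, hd⟩ y' hy''
        simp only [Set.mem_preimage, Set.mem_singleton_iff] at hc hd
        by_cases hcS : E c = ⊥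
        · have hx0 : x' = 0 := by rw [hcS] at hx''; simpa using hx''
          rw [hx0, hzl]
          exact (p (i + j)).zero_mem
        by_cases hdS : E d = ⊥
        · have hy0 : y' = 0 := by rw [hdS] at hy''; simpa using hy''
          rw [hy0, hlz]
          exact (p (i + j)).zero_mem
        by_cases hcdS : E (c * d) = ⊥
        · have h := hEbr c d x' y' hx'' hy''
          rw [hcdS] at h
          rw [show ⁅x', y'⁆ = 0 by simpa using h]
          exact (p (i + j)).zero_mem
        · have hcd : χ (c * d) = i + j := by
            rw [hχadd c d hcS hdS hcdS, hc, hd]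
          exact hEle (c * d) (i + j) hcd (hEbr c d x' y' hx'' hy'')
      · show ⁅x', (0 : (AlgebraicClosure ℚ) ⊗[ℚ] 𝔫)⁆ ∈ p (i + j)
        rw [hlz]
        exact (p (i + j)).zero_mem
      · intro y₁ y₂ h₁ h₂
        show ⁅x', y₁ + y₂⁆ ∈ p (i + j)
        rw [hladd]
        exact (p (i + j)).add_mem h₁ h₂
    · show ⁅(0 : (AlgebraicClosure ℚ) ⊗[ℚ] 𝔫), y⁆ ∈ p (i + j)
      rw [hzl]
      exact (p (i + j)).zero_mem
    · intro x₁ x₂ h₁ h₂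
      show ⁅x₁ + x₂, y⁆ ∈ p (i + j)
      rw [haddl]
      exact (p (i + j)).add_mem h₁ h₂
  -- invariance
  have hmapE : ∀ c, Submodule.map F (E c) = E c := by
    intro c
    have hle : Submodule.map F (E c) ≤ E c := by
      rw [Submodule.map_le_iff_le_comap]
      intro v hv
      exact Module.End.mapsTo_maxGenEigenspace_of_comm (Commute.refl F) c hv
    refine Submodule.eq_of_le_of_finrank_le hle ?_
    exact le_of_eq (Submodule.equivMapOfInjective F hFinj (E c)).finrank_eq
  have hmap : ∀ k : ℤ, Submodule.map F (p k) = p k := by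
    intro k
    rw [hpdef]
    simp only [Submodule.map_iSup, hmapE]
  -- eigenvalues on p 0 are roots of unity
  have heig : ∀ μ : AlgebraicClosure ℚ,
      (∃ x ∈ p 0, x ≠ 0 ∧ F x = μ • x) → ∃ n : ℕ, 0 < n ∧ μ ^ n = 1 := by
    rintro μ ⟨x, hx0, hxne, hxeq⟩
    by_contra hRoU
    have hxE : x ∈ E μ := by
      rw [hEdef, Module.End.mem_maxGenEigenspace]
      refine ⟨1, ?_⟩
      rw [pow_one, LinearMap.sub_apply, LinearMap.smul_apply, Module.End.one_apply, hxeq, sub_self]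
    have hES : E μ ≠ ⊥ := by
      intro h
      rw [h] at hxE
      exact hxne (by simpa using hxE)
    have hχμ : χ μ ≠ 0 := hχne μ hES hRoU
    have hdisj : Disjoint (E μ) (⨆ c ∈ χ ⁻¹' {(0 : ℤ)}, E c) :=
      hEind.disjoint_biSup (by simp [Set.mem_preimage, hχμ])
    exact hxne (Submodule.disjoint_def.mp hdisj x hxE hx0)
  refine ⟨⟨p, ⟨hinternal, hbr⟩, hmap, heig⟩, ?_⟩
  intro hyp
  refine ⟨p, ⟨hinternal, hbr⟩, ?_⟩
  have hbot : ∀ c ∈ χ ⁻¹' {(0 : ℤ)}, E c = ⊥ := by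
    intro c hc
    by_contra hne
    exact hχne c hne (hyp c (hev c hne)) (by simpa using hc)
  rw [hpdef]
  rw [iSup₂_eq_bot]
  exact hbot
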